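/- Under the saturation assumption, if the saturated independent set Î belongs to 𝕀^{−*}∖𝕀*_+ (i.e., Î contains neither i* nor j* and Î is not a subset of any independent set of G containing i* or j*), then there exists δ0∈(0,δ̄] such that Q(Ḡ,α(δ)) > Q(G,α(δ)) for all δ∈(0,δ0); that is, a Braess paradox exists for δ sufficiently small. -/

import Mathlib

open Classical Finset

noncomputable section

def nbr {V : Type} [Fintype V] (G : SimpleGraph V) (S : Finset V) : Finset V :=
  Finset.univ.filter fun j => ∃ i ∈ S, G.Adj i j

def aSum {V : Type} (α : V → ℝ) (S : Finset V) : ℝ := ∑ i ∈ S, α i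

def IsIndep {V : Type} (G : SimpleGraph V) (I : Finset V) : Prop :=
  I.Nonempty ∧ ∀ i ∈ I, ∀ j ∈ I, ¬ G.Adj i j

def indepSets {V : Type} [Fintype V] (G : SimpleGraph V) : Finset (Finset V) :=
  Finset.univ.filter fun I => IsIndep G I

def Ncond {V : Type} [Fintype V] (G : SimpleGraph V) (α : V → ℝ) : Prop :=
  ∀ I ∈ indepSets G, aSum α I < aSum α (nbr G I)

def Tlist {V : Type} [Fintype V] [DecidableEq V] (G : SimpleGraph V) (α : V → ℝ) :
    List V → Finset V → ℝ
  | [], _ => 1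
  | i :: l, P =>
      α i / (aSum α (nbr G (insert i P)) - aSum α (insert i P)) * Tlist G α l (insert i P)

def Erat {V : Type} [Fintype V] [DecidableEq V] (G : SimpleGraph V) (α : V → ℝ) :
    List V → Finset V → ℝ
  | [], _ => 0
  | i :: l, P =>
      aSum α (nbr G (insert i P)) / (aSum α (nbr G (insert i P)) - aSum α (insert i P)) +
        Erat G α l (insert i P)

def TI {V : Type} [Fintype V] [DecidableEq V] (G : SimpleGraph V) (α : V → ℝ) (I : Finset V) : ℝ :=
  ∑ l ∈ I.toList.permutations.toFinset, Tlist G α l ∅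

def EI {V : Type} [Fintype V] [DecidableEq V] (G : SimpleGraph V) (α : V → ℝ) (I : Finset V) : ℝ :=
  ∑ l ∈ I.toList.permutations.toFinset, Erat G α l ∅ * Tlist G α l ∅

def meanQ {V : Type} [Fintype V] [DecidableEq V] (G : SimpleGraph V) (α : V → ℝ) : ℝ :=
  (1 + ∑ I ∈ indepSets G, TI G α I)⁻¹ * ∑ I ∈ indepSets G, EI G α I

def IsWord {V : Type} (G : SimpleGraph V) (w : List V) : Prop :=
  w.Pairwise fun a b => ¬ G.Adj a b

def piHatAux {V : Type} [Fintype V] [DecidableEq V] (G : SimpleGraph V) (α : V → ℝ) :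
    List V → Finset V → ℝ
  | [], _ => 1
  | i :: l, P => α i / aSum α (nbr G (insert i P)) * piHatAux G α l (insert i P)

def piHat {V : Type} [Fintype V] [DecidableEq V] (G : SimpleGraph V) (α : V → ℝ) (w : List V) : ℝ :=
  piHatAux G α w ∅

def addEdge {V : Type} (G : SimpleGraph V) (u v : V) : SimpleGraph V :=
  G ⊔ SimpleGraph.fromEdgeSet {s(u, v)}

end

open Filter Topology
set_option linter.unusedSectionVars false

noncomputable section BP
variable {V : Type} [Fintype V] [DecidableEq V]

lemma Tlist_append (G : SimpleGraph V) (α : V → ℝ) (l1 l2 : List V) (P : Finset V) :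
    Tlist G α (l1 ++ l2) P = Tlist G α l1 P * Tlist G α l2 (P ∪ l1.toFinset) := by
  induction l1 generalizing P with
  | nil => simp [Tlist]
  | cons i l ih =>
      simp only [List.cons_append, Tlist, List.append_eq, ih, List.toFinset_cons,
        Finset.union_insert, Finset.insert_union, mul_assoc]

lemma Erat_append (G : SimpleGraph V) (α : V → ℝ) (l1 l2 : List V) (P : Finset V) :
    Erat G α (l1 ++ l2) P = Erat G α l1 P + Erat G α l2 (P ∪ l1.toFinset) := by
  induction l1 generalizing P with
  | nil => simp [Erat]
  | cons i l ih =>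
      simp only [List.cons_append, Erat, List.append_eq, ih, List.toFinset_cons,
        Finset.union_insert, Finset.insert_union, add_assoc]

lemma aSum_linear (a b : V → ℝ) (δ : ℝ) (S : Finset V) :
    aSum (fun i => a i + b i * δ) S = aSum a S + δ * aSum b S := by
  simp [aSum, Finset.sum_add_distrib, Finset.mul_sum, mul_comm]

lemma aSum_nonneg {α : V → ℝ} (h : ∀ i, 0 ≤ α i) (S : Finset V) : 0 ≤ aSum α S :=
  Finset.sum_nonneg fun i _ => h i

lemma aSum_mono {α : V → ℝ} (h : ∀ i, 0 ≤ α i) {S T : Finset V} (hST : S ⊆ T) :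
    aSum α S ≤ aSum α T :=
  Finset.sum_le_sum_of_subset_of_nonneg hST fun i _ _ => h i

lemma aSum_pos {α : V → ℝ} (h : ∀ i, 0 < α i) {S : Finset V} (hS : S.Nonempty) : 0 < aSum α S :=
  Finset.sum_pos (fun i _ => h i) hS

lemma union_singleton' {i : V} (P : Finset V) : P ∪ {i} = insert i P := by
  rw [Finset.union_comm, ← Finset.insert_eq]

lemma tendsto_aSum (a b : V → ℝ) (S : Finset V) :
    Filter.Tendsto (fun δ : ℝ => aSum (fun i => a i + b i * δ) S) (𝓝 0) (𝓝 (aSum a S)) := by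
  simp only [aSum_linear]
  have : Filter.Tendsto (fun δ : ℝ => aSum a S + δ * aSum b S) (𝓝 0)
      (𝓝 (aSum a S + 0 * aSum b S)) :=
    tendsto_const_nhds.add (tendsto_id.mul tendsto_const_nhds)
  simpa using this

lemma pref_succ {i : V} {l : List V} {P Q : Finset V} (k : ℕ)
    (h : Q = insert i P ∪ (l.take (k+1)).toFinset) :
    Q = P ∪ (((i :: l).take (k+2)).toFinset) := by
  subst h
  simp [List.take, Finset.union_insert, Finset.insert_union]

lemma tendsto_Tlist (G : SimpleGraph V) (a b : V → ℝ) (l : List V) (P : Finset V)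
    (h : ∀ k < l.length,
      aSum a (nbr G (P ∪ (l.take (k+1)).toFinset)) - aSum a (P ∪ (l.take (k+1)).toFinset) ≠ 0) :
    Filter.Tendsto (fun δ : ℝ => Tlist G (fun i => a i + b i * δ) l P) (𝓝 0)
      (𝓝 (Tlist G a l P)) := by
  induction l generalizing P with
  | nil => simp only [Tlist]; exact tendsto_const_nhds
  | cons i l ih =>
      have h0 : aSum a (nbr G (insert i P)) - aSum a (insert i P) ≠ 0 := by
        have := h 0 (Nat.succ_pos _); simpa [union_singleton'] using this
      have hrest : ∀ k < l.length,
          aSum a (nbr G ((insert i P) ∪ (l.take (k+1)).toFinset))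
            - aSum a ((insert i P) ∪ (l.take (k+1)).toFinset) ≠ 0 := by
        intro k hk
        have := h (k+1) (by simpa using Nat.succ_lt_succ hk)
        rw [pref_succ k rfl]
        simpa using this
      have hnum : Filter.Tendsto (fun δ : ℝ => a i + b i * δ) (𝓝 0) (𝓝 (a i)) := by
        have hc : Continuous (fun δ : ℝ => a i + b i * δ) := by fun_prop
        simpa using hc.tendsto 0
      simp only [Tlist]
      exact (hnum.div ((tendsto_aSum a b _).sub (tendsto_aSum a b _)) h0).mul (ih _ hrest)

lemma tendsto_Erat (G : SimpleGraph V) (a b : V → ℝ) (l : List V) (P : Finset V)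
    (h : ∀ k < l.length,
      aSum a (nbr G (P ∪ (l.take (k+1)).toFinset)) - aSum a (P ∪ (l.take (k+1)).toFinset) ≠ 0) :
    Filter.Tendsto (fun δ : ℝ => Erat G (fun i => a i + b i * δ) l P) (𝓝 0)
      (𝓝 (Erat G a l P)) := by
  induction l generalizing P with
  | nil => simp only [Erat]; exact tendsto_const_nhds
  | cons i l ih =>
      have h0 : aSum a (nbr G (insert i P)) - aSum a (insert i P) ≠ 0 := by
        have := h 0 (Nat.succ_pos _); simpa [union_singleton'] using this
      have hrest : ∀ k < l.length,
          aSum a (nbr G ((insert i P) ∪ (l.take (k+1)).toFinset))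
            - aSum a ((insert i P) ∪ (l.take (k+1)).toFinset) ≠ 0 := by
        intro k hk
        have := h (k+1) (by simpa using Nat.succ_lt_succ hk)
        rw [pref_succ k rfl]
        simpa using this
      simp only [Erat]
      exact (Filter.Tendsto.div (tendsto_aSum a b _)
        ((tendsto_aSum a b _).sub (tendsto_aSum a b _)) h0).add (ih _ hrest)

lemma Tlist_pos (G : SimpleGraph V) (α : V → ℝ) (l : List V) (P : Finset V)
    (hα : ∀ i, 0 < α i)
    (h : ∀ k < l.length,
      0 < aSum α (nbr G (P ∪ (l.take (k+1)).toFinset)) - aSum α (P ∪ (l.take (k+1)).toFinset)) :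
    0 < Tlist G α l P := by
  induction l generalizing P with
  | nil => simp [Tlist]
  | cons i l ih =>
      have h0 : 0 < aSum α (nbr G (insert i P)) - aSum α (insert i P) := by
        have := h 0 (Nat.succ_pos _); simpa [union_singleton'] using this
      have hrest : ∀ k < l.length,
          0 < aSum α (nbr G ((insert i P) ∪ (l.take (k+1)).toFinset))
            - aSum α ((insert i P) ∪ (l.take (k+1)).toFinset) := by
        intro k hk
        have := h (k+1) (by simpa using Nat.succ_lt_succ hk)
        rw [pref_succ k rfl]
        simpa using this
      simp only [Tlist]
      exact mul_pos (div_pos (hα i) h0) (ih _ hrest)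

lemma Erat_nonneg (G : SimpleGraph V) (α : V → ℝ) (l : List V) (P : Finset V)
    (hα : ∀ i, 0 ≤ α i)
    (h : ∀ k < l.length,
      0 < aSum α (nbr G (P ∪ (l.take (k+1)).toFinset)) - aSum α (P ∪ (l.take (k+1)).toFinset)) :
    0 ≤ Erat G α l P := by
  induction l generalizing P with
  | nil => simp [Erat]
  | cons i l ih =>
      have h0 : 0 < aSum α (nbr G (insert i P)) - aSum α (insert i P) := by
        have := h 0 (Nat.succ_pos _); simpa [union_singleton'] using this
      have hrest : ∀ k < l.length,
          0 < aSum α (nbr G ((insert i P) ∪ (l.take (k+1)).toFinset))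
            - aSum α ((insert i P) ∪ (l.take (k+1)).toFinset) := by
        intro k hk
        have := h (k+1) (by simpa using Nat.succ_lt_succ hk)
        rw [pref_succ k rfl]
        simpa using this
      simp only [Erat]
      exact add_nonneg (div_nonneg (aSum_nonneg hα _) h0.le) (ih _ hrest)

lemma Tlist_le (G G' : SimpleGraph V) (α : V → ℝ) (l : List V) (P : Finset V)
    (hα : ∀ i, 0 < α i)
    (h : ∀ k < l.length,
      (0 < aSum α (nbr G (P ∪ (l.take (k+1)).toFinset)) - aSum α (P ∪ (l.take (k+1)).toFinset)) ∧
      (aSum α (nbr G (P ∪ (l.take (k+1)).toFinset)) ≤ aSum α (nbr G' (P ∪ (l.take (k+1)).toFinset)))) :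
    Tlist G' α l P ≤ Tlist G α l P := by
  induction l generalizing P with
  | nil => simp [Tlist]
  | cons i l ih =>
      have h0' : 0 < aSum α (nbr G (insert i P)) - aSum α (insert i P) ∧
          aSum α (nbr G (insert i P)) ≤ aSum α (nbr G' (insert i P)) := by
        have := h 0 (Nat.succ_pos _); simpa [union_singleton'] using this
      have hrest : ∀ k < l.length,
          (0 < aSum α (nbr G ((insert i P) ∪ (l.take (k+1)).toFinset))
            - aSum α ((insert i P) ∪ (l.take (k+1)).toFinset)) ∧
          (aSum α (nbr G ((insert i P) ∪ (l.take (k+1)).toFinset))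
            ≤ aSum α (nbr G' ((insert i P) ∪ (l.take (k+1)).toFinset))) := by
        intro k hk
        have := h (k+1) (by simpa using Nat.succ_lt_succ hk)
        rw [pref_succ k rfl]
        simpa using this
      have hG'pos : ∀ k < l.length,
          0 < aSum α (nbr G' ((insert i P) ∪ (l.take (k+1)).toFinset))
            - aSum α ((insert i P) ∪ (l.take (k+1)).toFinset) := by
        intro k hk
        have := hrest k hk
        linarith [this.1, this.2]
      have h0G' : 0 < aSum α (nbr G' (insert i P)) - aSum α (insert i P) := by
        linarith [h0'.1, h0'.2]
      simp only [Tlist]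
      have hTpos : 0 < Tlist G' α l (insert i P) :=
        Tlist_pos G' α l _ hα hG'pos
      apply mul_le_mul _ (ih _ hrest) hTpos.le
      · exact le_of_lt (div_pos (hα i) h0'.1)
      · exact div_le_div_of_nonneg_left (hα i).le h0'.1 (by linarith [h0'.2])

lemma Tlist_congr (G G' : SimpleGraph V) (α : V → ℝ) (l : List V) (P : Finset V)
    (h : ∀ k < l.length, nbr G' (P ∪ (l.take (k+1)).toFinset) = nbr G (P ∪ (l.take (k+1)).toFinset)) :
    Tlist G' α l P = Tlist G α l P := by
  induction l generalizing P with
  | nil => simp [Tlist]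
  | cons i l ih =>
      have h0 : nbr G' (insert i P) = nbr G (insert i P) := by
        have := h 0 (Nat.succ_pos _); simpa [union_singleton'] using this
      have hrest : ∀ k < l.length,
          nbr G' ((insert i P) ∪ (l.take (k+1)).toFinset)
            = nbr G ((insert i P) ∪ (l.take (k+1)).toFinset) := by
        intro k hk
        have := h (k+1) (by simpa using Nat.succ_lt_succ hk)
        rw [pref_succ k rfl]
        simpa using this
      simp only [Tlist, h0, ih _ hrest]

lemma Erat_congr (G G' : SimpleGraph V) (α : V → ℝ) (l : List V) (P : Finset V)
    (h : ∀ k < l.length, nbr G' (P ∪ (l.take (k+1)).toFinset) = nbr G (P ∪ (l.take (k+1)).toFinset)) :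
    Erat G' α l P = Erat G α l P := by
  induction l generalizing P with
  | nil => simp [Erat]
  | cons i l ih =>
      have h0 : nbr G' (insert i P) = nbr G (insert i P) := by
        have := h 0 (Nat.succ_pos _); simpa [union_singleton'] using this
      have hrest : ∀ k < l.length,
          nbr G' ((insert i P) ∪ (l.take (k+1)).toFinset)
            = nbr G ((insert i P) ∪ (l.take (k+1)).toFinset) := by
        intro k hk
        have := h (k+1) (by simpa using Nat.succ_lt_succ hk)
        rw [pref_succ k rfl]
        simpa using this
      simp only [Erat, h0, ih _ hrest]
lemma mem_nbr (G : SimpleGraph V) (S : Finset V) (j : V) :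
    j ∈ nbr G S ↔ ∃ i ∈ S, G.Adj i j := by simp [nbr]

lemma addEdge_adj {G : SimpleGraph V} {u v : V} (i j : V) :
    (addEdge G u v).Adj i j ↔ G.Adj i j ∨ ((i = u ∧ j = v) ∨ (i = v ∧ j = u)) ∧ i ≠ j := by
  simp [addEdge, SimpleGraph.fromEdgeSet_adj, Sym2.eq_iff]

lemma nbr_subset_addEdge (G : SimpleGraph V) (u v : V) (S : Finset V) :
    nbr G S ⊆ nbr (addEdge G u v) S := by
  intro j hj
  rw [mem_nbr] at hj ⊢
  obtain ⟨i, hi, hadj⟩ := hj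
  exact ⟨i, hi, by rw [addEdge_adj]; exact Or.inl hadj⟩

lemma nbr_addEdge_of_not_mem {G : SimpleGraph V} {u v : V} {S : Finset V}
    (hu : u ∉ S) (hv : v ∉ S) : nbr (addEdge G u v) S = nbr G S := by
  ext j
  rw [mem_nbr, mem_nbr]
  constructor
  · rintro ⟨i, hi, hadj⟩
    rw [addEdge_adj] at hadj
    rcases hadj with h | ⟨⟨h1, h2⟩ | ⟨h1, h2⟩, _⟩
    · exact ⟨i, hi, h⟩
    · exact absurd (h1 ▸ hi) hu
    · exact absurd (h1 ▸ hi) hv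
  · rintro ⟨i, hi, hadj⟩
    exact ⟨i, hi, by rw [addEdge_adj]; exact Or.inl hadj⟩

lemma nbr_addEdge_singleton {G : SimpleGraph V} {u v : V} (hne : u ≠ v) :
    nbr (addEdge G u v) {u} = insert v (nbr G {u}) := by
  ext j
  rw [mem_nbr, Finset.mem_insert, mem_nbr]
  constructor
  · rintro ⟨i, hi, hadj⟩
    rw [Finset.mem_singleton] at hi
    subst hi
    rw [addEdge_adj] at hadj
    rcases hadj with h | ⟨⟨_, h2⟩ | ⟨h1, _⟩, _⟩
    · exact Or.inr ⟨_, Finset.mem_singleton_self _, h⟩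
    · exact Or.inl h2
    · exact absurd h1 hne
  · rintro (rfl | ⟨i, hi, hadj⟩)
    · exact ⟨_, Finset.mem_singleton_self _, by rw [addEdge_adj]; exact Or.inr ⟨Or.inl ⟨rfl, rfl⟩, hne⟩⟩
    · rw [Finset.mem_singleton] at hi
      subst hi
      exact ⟨_, Finset.mem_singleton_self _, by rw [addEdge_adj]; exact Or.inl hadj⟩

lemma indepSets_addEdge_subset (G : SimpleGraph V) (u v : V) :
    indepSets (addEdge G u v) ⊆ indepSets G := by
  intro I hI
  simp only [indepSets, Finset.mem_filter, Finset.mem_univ, true_and] at hI ⊢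
  simp only [IsIndep] at hI ⊢
  refine ⟨hI.1, fun i hi j hj hadj => hI.2 i hi j hj ?_⟩
  rw [addEdge_adj]
  exact Or.inl hadj

lemma mem_indepSets_addEdge {G : SimpleGraph V} {u v : V} {I : Finset V}
    (hI : I ∈ indepSets G) (h : ¬(u ∈ I ∧ v ∈ I)) : I ∈ indepSets (addEdge G u v) := by
  simp only [indepSets, Finset.mem_filter, Finset.mem_univ, true_and] at hI ⊢
  simp only [IsIndep] at hI ⊢
  refine ⟨hI.1, fun i hi j hj hadj => ?_⟩
  rw [addEdge_adj] at hadj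
  rcases hadj with hadj | ⟨⟨rfl, rfl⟩ | ⟨rfl, rfl⟩, _⟩
  · exact hI.2 i hi j hj hadj
  · exact h ⟨hi, hj⟩
  · exact h ⟨hj, hi⟩

lemma subset_mem_indepSets {G : SimpleGraph V} {I Q : Finset V}
    (hI : I ∈ indepSets G) (hQ : Q ⊆ I) (hne : Q.Nonempty) : Q ∈ indepSets G := by
  simp only [indepSets, Finset.mem_filter, Finset.mem_univ, true_and] at hI ⊢
  simp only [IsIndep] at hI ⊢
  exact ⟨hne, fun i hi j hj => hI.2 i (hQ hi) j (hQ hj)⟩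

lemma singleton_mem_indepSets (G : SimpleGraph V) (i : V) : {i} ∈ indepSets G := by
  simp only [indepSets, Finset.mem_filter, Finset.mem_univ, true_and]
  simp only [IsIndep]
  refine ⟨⟨i, Finset.mem_singleton_self i⟩, fun x hx y hy => ?_⟩
  rw [Finset.mem_singleton] at hx hy
  subst hx; subst hy
  exact G.loopless.irrefl _

lemma perm_toFinset {I : Finset V} {l : List V} (hl : l ∈ I.toList.permutations.toFinset) :
    l.toFinset = I ∧ l.Nodup := by
  rw [List.mem_toFinset, List.mem_permutations] at hl
  constructor
  · rw [List.toFinset_eq_of_perm _ _ hl, Finset.toList_toFinset]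
  · exact hl.nodup_iff.mpr I.nodup_toList

lemma take_toFinset_subset (l : List V) (k : ℕ) : (l.take k).toFinset ⊆ l.toFinset := by
  intro x hx
  rw [List.mem_toFinset] at hx ⊢
  exact List.mem_of_mem_take hx

lemma take_toFinset_nonempty {l : List V} {k : ℕ} (hk : k < l.length) :
    ((l.take (k+1)).toFinset : Finset V).Nonempty := by
  rw [List.toFinset_nonempty_iff]
  intro h
  have := congrArg List.length h
  rw [List.length_take] at this
  simp only [List.length_nil] at this
  omega
lemma tendsto_id_zero : Filter.Tendsto (fun δ : ℝ => δ) (𝓝[>] 0) (𝓝 0) :=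
  tendsto_id.mono_left nhdsWithin_le_nhds

lemma key_lemma (G : SimpleGraph V) (a b : V → ℝ) (Ihat : Finset V)
    (ha : ∀ i, 0 < a i)
    (hgpos : ∀ Q ∈ indepSets G, Q ≠ Ihat → 0 < aSum a (nbr G Q) - aSum a Q)
    (hsat0 : aSum a (nbr G Ihat) - aSum a Ihat = 0)
    (hd : 0 < aSum b (nbr G Ihat) - aSum b Ihat)
    {I : Finset V} (hI : I ∈ indepSets G) {l : List V}
    (hl : l ∈ I.toList.permutations.toFinset) :
    ∃ t : ℝ, 0 ≤ t ∧
      Filter.Tendsto (fun δ : ℝ => δ * Tlist G (fun i => a i + b i * δ) l ∅) (𝓝[>] 0) (𝓝 t) ∧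
      Filter.Tendsto (fun δ : ℝ => δ^2 * (Erat G (fun i => a i + b i * δ) l ∅ *
        Tlist G (fun i => a i + b i * δ) l ∅)) (𝓝[>] 0)
        (𝓝 (aSum a (nbr G Ihat) / (aSum b (nbr G Ihat) - aSum b Ihat) * t)) ∧
      ((∃ k, k < l.length ∧ (l.take (k+1)).toFinset = Ihat) → 0 < t) := by
  obtain ⟨hlf, hnd⟩ := perm_toFinset hl
  by_cases hsing : ∃ k, k < l.length ∧ (l.take (k+1)).toFinset = Ihat
  · -- singular case
    obtain ⟨k, hk, hkI⟩ := hsing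
    rcases List.eq_nil_or_concat (l.take (k+1)) with hnil | ⟨l1, i, htake⟩
    · exfalso
      have hne := take_toFinset_nonempty hk
      rw [hnil] at hne
      simp at hne
    set l2 := l.drop (k+1) with hl2def
    have hsplit : l = l1 ++ i :: l2 := by
      conv_lhs => rw [← List.take_append_drop (k+1) l]
      rw [htake, List.concat_eq_append, List.append_assoc, List.singleton_append]
    have hIh : insert i l1.toFinset = Ihat := by
      rw [← hkI, htake, List.concat_eq_append]
      simp [union_singleton']
    have hnd' : (l1 ++ i :: l2).Nodup := hsplit ▸ hnd
    rw [List.nodup_append] at hnd'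
    obtain ⟨hnd1, hnd2, hdisj⟩ := hnd'
    have hil1 : i ∉ l1 := fun h => hdisj i h i List.mem_cons_self rfl
    have hl2i : ∀ x ∈ l2, x ∉ l1 ∧ x ≠ i := by
      intro x hx
      refine ⟨fun h => hdisj x h x (List.mem_cons_of_mem _ hx) rfl, fun h => ?_⟩
      exact (List.nodup_cons.mp hnd2).1 (h ▸ hx)
    have hIhat_sub : Ihat ⊆ I := by
      rw [← hkI, ← hlf]; exact take_toFinset_subset l (k+1)
    have hIhat_ne : Ihat.Nonempty := hkI ▸ take_toFinset_nonempty hk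
    have hl1sub : l1.toFinset ⊆ Ihat := by
      rw [← hIh]; exact Finset.subset_insert _ _
    have hl2sub : l2.toFinset ⊆ I := by
      intro x hx
      rw [List.mem_toFinset] at hx
      rw [← hlf, List.mem_toFinset, hsplit]
      exact List.mem_append_right _ (List.mem_cons_of_mem _ hx)
    have hiIhat : i ∈ Ihat := hIh ▸ Finset.mem_insert_self i _
    -- gap facts for l1 prefixes
    have hg1 : ∀ m < l1.length,
        0 < aSum a (nbr G ((∅ : Finset V) ∪ (l1.take (m+1)).toFinset))
          - aSum a ((∅ : Finset V) ∪ (l1.take (m+1)).toFinset) := by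
      intro m hm
      rw [Finset.empty_union]
      have hQsub : (l1.take (m+1)).toFinset ⊆ I :=
        (take_toFinset_subset l1 (m+1)).trans (hl1sub.trans hIhat_sub)
      have hQind : (l1.take (m+1)).toFinset ∈ indepSets G :=
        subset_mem_indepSets hI hQsub (take_toFinset_nonempty hm)
      refine hgpos _ hQind (fun h => ?_)
      have : i ∈ (l1.take (m+1)).toFinset := h ▸ hiIhat
      rw [List.mem_toFinset] at this
      exact hil1 (List.mem_of_mem_take this)
    -- gap facts for l2 prefixes from base Ihat
    have hg2 : ∀ m < l2.length,
        0 < aSum a (nbr G (Ihat ∪ (l2.take (m+1)).toFinset))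
          - aSum a (Ihat ∪ (l2.take (m+1)).toFinset) := by
      intro m hm
      have hQsub : Ihat ∪ (l2.take (m+1)).toFinset ⊆ I :=
        Finset.union_subset hIhat_sub ((take_toFinset_subset l2 (m+1)).trans hl2sub)
      have hQind : Ihat ∪ (l2.take (m+1)).toFinset ∈ indepSets G :=
        subset_mem_indepSets hI hQsub
          (hIhat_ne.mono Finset.subset_union_left)
      refine hgpos _ hQind (fun h => ?_)
      obtain ⟨x, hx⟩ := take_toFinset_nonempty hm
      have hxQ : x ∈ Ihat := h ▸ Finset.mem_union_right _ hx
      rw [List.mem_toFinset] at hx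
      have hxl2 := List.mem_of_mem_take hx
      rw [← hIh, Finset.mem_insert] at hxQ
      rcases hxQ with h1 | h1
      · exact (hl2i x hxl2).2 h1
      · rw [List.mem_toFinset] at h1
        exact (hl2i x hxl2).1 h1
    have hg1ne : ∀ m < l1.length,
        aSum a (nbr G ((∅ : Finset V) ∪ (l1.take (m+1)).toFinset))
          - aSum a ((∅ : Finset V) ∪ (l1.take (m+1)).toFinset) ≠ 0 :=
      fun m hm => ne_of_gt (hg1 m hm)
    have hg2ne : ∀ m < l2.length,
        aSum a (nbr G (Ihat ∪ (l2.take (m+1)).toFinset))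
          - aSum a (Ihat ∪ (l2.take (m+1)).toFinset) ≠ 0 :=
      fun m hm => ne_of_gt (hg2 m hm)
    set d : ℝ := aSum b (nbr G Ihat) - aSum b Ihat with hd_def
    have hdne : d ≠ 0 := ne_of_gt hd
    have hgapδ : ∀ δ : ℝ, aSum (fun i => a i + b i * δ) (nbr G Ihat)
        - aSum (fun i => a i + b i * δ) Ihat = δ * d := by
      intro δ
      rw [aSum_linear, aSum_linear, hd_def]
      linear_combination hsat0
    -- T part
    have hT1 := (tendsto_Tlist G a b l1 ∅ hg1ne).mono_left (nhdsWithin_le_nhds : 𝓝[>] (0:ℝ) ≤ 𝓝 0)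
    have hT2 := (tendsto_Tlist G a b l2 Ihat hg2ne).mono_left (nhdsWithin_le_nhds : 𝓝[>] (0:ℝ) ≤ 𝓝 0)
    have hE1 := (tendsto_Erat G a b l1 ∅ hg1ne).mono_left (nhdsWithin_le_nhds : 𝓝[>] (0:ℝ) ≤ 𝓝 0)
    have hE2 := (tendsto_Erat G a b l2 Ihat hg2ne).mono_left (nhdsWithin_le_nhds : 𝓝[>] (0:ℝ) ≤ 𝓝 0)
    have hlin : Filter.Tendsto (fun δ : ℝ => (a i + b i * δ) / d) (𝓝[>] 0) (𝓝 (a i / d)) := by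
      have hc : Continuous (fun δ : ℝ => a i + b i * δ) := by fun_prop
      exact ((by simpa using hc.tendsto 0 : Filter.Tendsto (fun δ : ℝ => a i + b i * δ)
        (𝓝 0) (𝓝 (a i))).mono_left (nhdsWithin_le_nhds : 𝓝[>] (0:ℝ) ≤ 𝓝 0)).div_const d
    have hTeq : ∀ᶠ δ in 𝓝[>] (0:ℝ),
        Tlist G (fun i => a i + b i * δ) l1 ∅ * ((a i + b i * δ) / d) *
          Tlist G (fun i => a i + b i * δ) l2 Ihat
        = δ * Tlist G (fun i => a i + b i * δ) l ∅ := by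
      filter_upwards [self_mem_nhdsWithin] with δ hδ
      have hδ0 : (δ:ℝ) ≠ 0 := ne_of_gt hδ
      rw [hsplit, Tlist_append]
      simp only [Tlist]
      rw [Finset.empty_union, hIh, hgapδ δ]
      generalize Tlist G (fun i => a i + b i * δ) l1 ∅ = x
      generalize Tlist G (fun i => a i + b i * δ) l2 Ihat = y
      field_simp
    set t : ℝ := Tlist G a l1 ∅ * (a i / d) * Tlist G a l2 Ihat with ht_def
    have hT : Filter.Tendsto (fun δ : ℝ => δ * Tlist G (fun i => a i + b i * δ) l ∅)
        (𝓝[>] 0) (𝓝 t) :=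
      Filter.Tendsto.congr' hTeq ((hT1.mul hlin).mul hT2)
    have htpos : 0 < t := by
      have h1 : 0 < Tlist G a l1 ∅ := Tlist_pos G a l1 ∅ ha hg1
      have h2 : 0 < Tlist G a l2 Ihat := Tlist_pos G a l2 Ihat ha hg2
      exact mul_pos (mul_pos h1 (div_pos (ha i) hd)) h2
    -- E part
    have hEeq : ∀ᶠ δ in 𝓝[>] (0:ℝ),
        δ * Erat G (fun i => a i + b i * δ) l1 ∅
          + aSum (fun i => a i + b i * δ) (nbr G Ihat) / d
          + δ * Erat G (fun i => a i + b i * δ) l2 Ihat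
        = δ * Erat G (fun i => a i + b i * δ) l ∅ := by
      filter_upwards [self_mem_nhdsWithin] with δ hδ
      have hδ0 : (δ:ℝ) ≠ 0 := ne_of_gt hδ
      rw [hsplit, Erat_append]
      simp only [Erat]
      rw [Finset.empty_union, hIh, hgapδ δ]
      field_simp
      ring
    have hSd : Filter.Tendsto
        (fun δ : ℝ => aSum (fun i => a i + b i * δ) (nbr G Ihat) / d) (𝓝[>] 0)
        (𝓝 (aSum a (nbr G Ihat) / d)) :=
      ((tendsto_aSum a b _).mono_left (nhdsWithin_le_nhds : 𝓝[>] (0:ℝ) ≤ 𝓝 0)).div_const d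
    have hE : Filter.Tendsto (fun δ : ℝ => δ * Erat G (fun i => a i + b i * δ) l ∅)
        (𝓝[>] 0) (𝓝 (aSum a (nbr G Ihat) / d)) := by
      have := ((tendsto_id_zero.mul hE1).add hSd).add (tendsto_id_zero.mul hE2)
      rw [show (0 * Erat G a l1 ∅ + aSum a (nbr G Ihat) / d + 0 * Erat G a l2 Ihat)
        = aSum a (nbr G Ihat) / d by ring] at this
      exact Filter.Tendsto.congr' hEeq this
    have hET : Filter.Tendsto (fun δ : ℝ => δ^2 * (Erat G (fun i => a i + b i * δ) l ∅ *
        Tlist G (fun i => a i + b i * δ) l ∅)) (𝓝[>] 0)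
        (𝓝 (aSum a (nbr G Ihat) / d * t)) := by
      have := hE.mul hT
      exact this.congr (fun δ => by ring)
    exact ⟨t, htpos.le, hT, hET, fun _ => htpos⟩
  · -- regular case
    have hne0 : ∀ k < l.length,
        aSum a (nbr G ((∅ : Finset V) ∪ (l.take (k+1)).toFinset))
          - aSum a ((∅ : Finset V) ∪ (l.take (k+1)).toFinset) ≠ 0 := by
      intro k hk
      rw [Finset.empty_union]
      have hQind : (l.take (k+1)).toFinset ∈ indepSets G :=
        subset_mem_indepSets hI (hlf ▸ take_toFinset_subset l (k+1)) (take_toFinset_nonempty hk)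
      exact ne_of_gt (hgpos _ hQind (fun h => hsing ⟨k, hk, h⟩))
    have hT0 := (tendsto_Tlist G a b l ∅ hne0).mono_left (nhdsWithin_le_nhds : 𝓝[>] (0:ℝ) ≤ 𝓝 0)
    have hE0 := (tendsto_Erat G a b l ∅ hne0).mono_left (nhdsWithin_le_nhds : 𝓝[>] (0:ℝ) ≤ 𝓝 0)
    refine ⟨0, le_refl 0, ?_, ?_, fun h => absurd h hsing⟩
    · simpa using tendsto_id_zero.mul hT0
    · have hsq : Filter.Tendsto (fun δ : ℝ => δ^2) (𝓝[>] (0:ℝ)) (𝓝 0) := by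
        have := ((continuous_pow 2).tendsto (0:ℝ)).mono_left
          (nhdsWithin_le_nhds : 𝓝[>] (0:ℝ) ≤ 𝓝 0)
        simpa using this
      have := hsq.mul (hE0.mul hT0)
      simpa using this
lemma Ihat_singular {Ihat : Finset V} (hne : Ihat.Nonempty) :
    ∃ k, k < Ihat.toList.length ∧ ((Ihat.toList.take (k+1)).toFinset : Finset V) = Ihat := by
  have hlen : 0 < Ihat.toList.length := by
    rw [Finset.length_toList]
    exact Finset.card_pos.mpr hne
  refine ⟨Ihat.toList.length - 1, by omega, ?_⟩
  have : Ihat.toList.length - 1 + 1 = Ihat.toList.length := by omega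
  rw [this, List.take_length, Finset.toList_toFinset]

lemma self_mem_perms (I : Finset V) : I.toList ∈ I.toList.permutations.toFinset := by
  rw [List.mem_toFinset, List.mem_permutations]

lemma sum_limits (G : SimpleGraph V) (a b : V → ℝ) (Ihat : Finset V)
    (ha : ∀ i, 0 < a i)
    (hgpos : ∀ Q ∈ indepSets G, Q ≠ Ihat → 0 < aSum a (nbr G Q) - aSum a Q)
    (hsat0 : aSum a (nbr G Ihat) - aSum a Ihat = 0)
    (hd : 0 < aSum b (nbr G Ihat) - aSum b Ihat)
    (hIhat : Ihat ∈ indepSets G) :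
    ∃ B : ℝ, 0 < B ∧
      Filter.Tendsto (fun δ : ℝ => δ * (1 + ∑ I ∈ indepSets G,
        TI G (fun i => a i + b i * δ) I)) (𝓝[>] 0) (𝓝 B) ∧
      Filter.Tendsto (fun δ : ℝ => δ^2 * ∑ I ∈ indepSets G,
        EI G (fun i => a i + b i * δ) I) (𝓝[>] 0)
        (𝓝 (aSum a (nbr G Ihat) / (aSum b (nbr G Ihat) - aSum b Ihat) * B)) := by
  have hIhat_ne : Ihat.Nonempty := by
    have := (Finset.mem_filter.mp hIhat).2
    exact this.1
  -- choose per (I, l) limits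
  have hkey : ∀ I : Finset V, ∀ l : List V, ∃ t : ℝ,
      (I ∈ indepSets G → l ∈ I.toList.permutations.toFinset → (0 ≤ t ∧
      Filter.Tendsto (fun δ : ℝ => δ * Tlist G (fun i => a i + b i * δ) l ∅) (𝓝[>] 0) (𝓝 t) ∧
      Filter.Tendsto (fun δ : ℝ => δ^2 * (Erat G (fun i => a i + b i * δ) l ∅ *
        Tlist G (fun i => a i + b i * δ) l ∅)) (𝓝[>] 0)
        (𝓝 (aSum a (nbr G Ihat) / (aSum b (nbr G Ihat) - aSum b Ihat) * t)) ∧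
      ((∃ k, k < l.length ∧ (l.take (k+1)).toFinset = Ihat) → 0 < t))) := by
    intro I l
    by_cases h : I ∈ indepSets G ∧ l ∈ I.toList.permutations.toFinset
    · obtain ⟨t, ht⟩ := key_lemma G a b Ihat ha hgpos hsat0 hd h.1 h.2
      exact ⟨t, fun _ _ => ht⟩
    · exact ⟨0, fun h1 h2 => absurd ⟨h1, h2⟩ h⟩
  choose tf htf using hkey
  set B : ℝ := ∑ I ∈ indepSets G, ∑ l ∈ I.toList.permutations.toFinset, tf I l with hB_def
  have hBpos : 0 < B := by
    rw [hB_def]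
    apply Finset.sum_pos'
    · intro I hI
      exact Finset.sum_nonneg fun l hl => ((htf I l) hI hl).1
    · refine ⟨Ihat, hIhat, Finset.sum_pos' (fun l hl => ((htf Ihat l) hIhat hl).1)
        ⟨Ihat.toList, self_mem_perms Ihat, ?_⟩⟩
      exact ((htf Ihat Ihat.toList) hIhat (self_mem_perms Ihat)).2.2.2 (Ihat_singular hIhat_ne)
  refine ⟨B, hBpos, ?_, ?_⟩
  · have hsum : Filter.Tendsto (fun δ : ℝ => δ + ∑ I ∈ indepSets G,
        ∑ l ∈ I.toList.permutations.toFinset,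
          δ * Tlist G (fun i => a i + b i * δ) l ∅) (𝓝[>] 0) (𝓝 (0 + B)) := by
      refine tendsto_id_zero.add ?_
      rw [hB_def]
      refine tendsto_finset_sum _ fun I hI => ?_
      exact tendsto_finset_sum _ fun l hl => ((htf I l) hI hl).2.1
    rw [zero_add] at hsum
    refine hsum.congr fun δ => ?_
    simp only [TI, mul_add, mul_one, Finset.mul_sum]
  · have hsum : Filter.Tendsto (fun δ : ℝ => ∑ I ∈ indepSets G,
        ∑ l ∈ I.toList.permutations.toFinset,
          δ^2 * (Erat G (fun i => a i + b i * δ) l ∅ *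
            Tlist G (fun i => a i + b i * δ) l ∅)) (𝓝[>] 0)
        (𝓝 (∑ I ∈ indepSets G, ∑ l ∈ I.toList.permutations.toFinset,
          aSum a (nbr G Ihat) / (aSum b (nbr G Ihat) - aSum b Ihat) * tf I l)) := by
      refine tendsto_finset_sum _ fun I hI => ?_
      exact tendsto_finset_sum _ fun l hl => ((htf I l) hI hl).2.2.1
    have heq : (∑ I ∈ indepSets G, ∑ l ∈ I.toList.permutations.toFinset,
        aSum a (nbr G Ihat) / (aSum b (nbr G Ihat) - aSum b Ihat) * tf I l)
        = aSum a (nbr G Ihat) / (aSum b (nbr G Ihat) - aSum b Ihat) * B := by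
      rw [hB_def, Finset.mul_sum]
      exact Finset.sum_congr rfl fun I _ => by rw [Finset.mul_sum]
    rw [heq] at hsum
    refine hsum.congr fun δ => ?_
    simp only [EI, Finset.mul_sum]
lemma prefix_mem_indep {G : SimpleGraph V} {I : Finset V} {l : List V}
    (hI : I ∈ indepSets G) (hl : l ∈ I.toList.permutations.toFinset)
    {k : ℕ} (hk : k < l.length) :
    (l.take (k+1)).toFinset ∈ indepSets G ∧ (l.take (k+1)).toFinset ⊆ I := by
  obtain ⟨hlf, _⟩ := perm_toFinset hl
  have hsub : (l.take (k+1)).toFinset ⊆ I := hlf ▸ take_toFinset_subset l (k+1)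
  exact ⟨subset_mem_indepSets hI hsub (take_toFinset_nonempty hk), hsub⟩

lemma reg_prefix_pos (G : SimpleGraph V) (a : V → ℝ) (Ihat : Finset V)
    (hgpos : ∀ Q ∈ indepSets G, Q ≠ Ihat → 0 < aSum a (nbr G Q) - aSum a Q)
    {I : Finset V} {l : List V}
    (hI : I ∈ indepSets G) (hl : l ∈ I.toList.permutations.toFinset)
    (hsub : ¬ Ihat ⊆ I) :
    ∀ k < l.length,
      0 < aSum a (nbr G ((∅ : Finset V) ∪ (l.take (k+1)).toFinset))
        - aSum a ((∅ : Finset V) ∪ (l.take (k+1)).toFinset) := by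
  intro k hk
  rw [Finset.empty_union]
  obtain ⟨hQind, hQsub⟩ := prefix_mem_indep hI hl hk
  exact hgpos _ hQind (fun h => hsub (h ▸ hQsub))

lemma tendsto_TI_reg (G : SimpleGraph V) (a b : V → ℝ) {I : Finset V}
    (hreg : ∀ l ∈ I.toList.permutations.toFinset, ∀ k < l.length,
      aSum a (nbr G ((∅ : Finset V) ∪ (l.take (k+1)).toFinset))
        - aSum a ((∅ : Finset V) ∪ (l.take (k+1)).toFinset) ≠ 0) :
    Filter.Tendsto (fun δ : ℝ => TI G (fun i => a i + b i * δ) I) (𝓝[>] 0)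
      (𝓝 (TI G a I)) := by
  simp only [TI]
  exact tendsto_finset_sum _ fun l hl =>
    (tendsto_Tlist G a b l ∅ (hreg l hl)).mono_left (nhdsWithin_le_nhds : 𝓝[>] (0:ℝ) ≤ 𝓝 0)

lemma tendsto_EI_reg (G : SimpleGraph V) (a b : V → ℝ) {I : Finset V}
    (hreg : ∀ l ∈ I.toList.permutations.toFinset, ∀ k < l.length,
      aSum a (nbr G ((∅ : Finset V) ∪ (l.take (k+1)).toFinset))
        - aSum a ((∅ : Finset V) ∪ (l.take (k+1)).toFinset) ≠ 0) :
    Filter.Tendsto (fun δ : ℝ => EI G (fun i => a i + b i * δ) I) (𝓝[>] 0)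
      (𝓝 (EI G a I)) := by
  simp only [EI]
  exact tendsto_finset_sum _ fun l hl =>
    (((tendsto_Erat G a b l ∅ (hreg l hl)).mul
      (tendsto_Tlist G a b l ∅ (hreg l hl))).mono_left
        (nhdsWithin_le_nhds : 𝓝[>] (0:ℝ) ≤ 𝓝 0))

lemma diff_limits (G : SimpleGraph V) (istar jstar : V) (hne : istar ≠ jstar)
    (hnadj : ¬ G.Adj istar jstar)
    (a b : V → ℝ) (ha : ∀ i, 0 < a i) (Ihat : Finset V)
    (hgpos : ∀ Q ∈ indepSets G, Q ≠ Ihat → 0 < aSum a (nbr G Q) - aSum a Q)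
    (hIhat_ne : Ihat.Nonempty)
    (hmem : istar ∉ Ihat ∧ jstar ∉ Ihat ∧
      ¬ ∃ J ∈ indepSets G, (istar ∈ J ∨ jstar ∈ J) ∧ Ihat ⊆ J) :
    ∃ c w : ℝ, 0 < c ∧
      Filter.Tendsto (fun δ : ℝ => (∑ I ∈ indepSets G, TI G (fun i => a i + b i * δ) I)
        - ∑ I ∈ indepSets (addEdge G istar jstar),
            TI (addEdge G istar jstar) (fun i => a i + b i * δ) I) (𝓝[>] 0) (𝓝 c) ∧
      Filter.Tendsto (fun δ : ℝ => (∑ I ∈ indepSets G, EI G (fun i => a i + b i * δ) I)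
        - ∑ I ∈ indepSets (addEdge G istar jstar),
            EI (addEdge G istar jstar) (fun i => a i + b i * δ) I) (𝓝[>] 0) (𝓝 w) := by
  set Gb := addEdge G istar jstar with hGb_def
  have hsubsets : indepSets Gb ⊆ indepSets G := indepSets_addEdge_subset G istar jstar
  have hgposb : ∀ Q ∈ indepSets Gb, Q ≠ Ihat → 0 < aSum a (nbr Gb Q) - aSum a Q := by
    intro Q hQ hQne
    have h1 := hgpos Q (hsubsets hQ) hQne
    have h2 : aSum a (nbr G Q) ≤ aSum a (nbr Gb Q) :=
      aSum_mono (fun i => (ha i).le) (nbr_subset_addEdge G istar jstar Q)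
    linarith
  have hkey1 : ∀ I : Finset V, ∃ u e : ℝ, I ∈ indepSets Gb →
      (Filter.Tendsto (fun δ : ℝ => TI G (fun i => a i + b i * δ) I
        - TI Gb (fun i => a i + b i * δ) I) (𝓝[>] 0) (𝓝 u) ∧ 0 ≤ u ∧
      (I = {istar} → 0 < u) ∧
      Filter.Tendsto (fun δ : ℝ => EI G (fun i => a i + b i * δ) I
        - EI Gb (fun i => a i + b i * δ) I) (𝓝[>] 0) (𝓝 e)) := by
    intro I
    by_cases hIb : I ∈ indepSets Gb
    swap
    · exact ⟨0, 0, fun h => absurd h hIb⟩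
    have hIG : I ∈ indepSets G := hsubsets hIb
    by_cases hsub : Ihat ⊆ I
    · -- stars not in I, pointwise equal
      have histar : istar ∉ I := fun h => hmem.2.2 ⟨I, hIG, Or.inl h, hsub⟩
      have hjstar : jstar ∉ I := fun h => hmem.2.2 ⟨I, hIG, Or.inr h, hsub⟩
      have hnbr : ∀ l ∈ I.toList.permutations.toFinset, ∀ k < l.length,
          nbr Gb ((∅ : Finset V) ∪ (l.take (k+1)).toFinset)
            = nbr G ((∅ : Finset V) ∪ (l.take (k+1)).toFinset) := by
        intro l hl k hk
        rw [Finset.empty_union]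
        obtain ⟨_, hQsub⟩ := prefix_mem_indep hIG hl hk
        exact nbr_addEdge_of_not_mem (fun h => histar (hQsub h)) (fun h => hjstar (hQsub h))
      have hTeq : ∀ β : V → ℝ, TI Gb β I = TI G β I := fun β =>
        Finset.sum_congr rfl fun l hl => Tlist_congr G Gb β l ∅ (hnbr l hl)
      have hEeq : ∀ β : V → ℝ, EI Gb β I = EI G β I := fun β =>
        Finset.sum_congr rfl fun l hl => by
          rw [Tlist_congr G Gb β l ∅ (hnbr l hl), Erat_congr G Gb β l ∅ (hnbr l hl)]
      refine ⟨0, 0, fun _ => ⟨?_, le_refl 0, fun hIi => ?_, ?_⟩⟩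
      · have heq : (fun δ : ℝ => TI G (fun i => a i + b i * δ) I
            - TI Gb (fun i => a i + b i * δ) I) = fun _ => 0 := by
          funext δ; rw [hTeq]; ring
        rw [heq]; exact tendsto_const_nhds
      · exfalso
        obtain ⟨x, hx⟩ := hIhat_ne
        have hxI : x ∈ I := hsub hx
        rw [hIi, Finset.mem_singleton] at hxI
        exact hmem.1 (hxI ▸ hx)
      · have heq : (fun δ : ℝ => EI G (fun i => a i + b i * δ) I
            - EI Gb (fun i => a i + b i * δ) I) = fun _ => 0 := by
          funext δ; rw [hEeq]; ring
        rw [heq]; exact tendsto_const_nhds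
    · -- regular case
      have hregG : ∀ l ∈ I.toList.permutations.toFinset, ∀ k < l.length,
          aSum a (nbr G ((∅ : Finset V) ∪ (l.take (k+1)).toFinset))
            - aSum a ((∅ : Finset V) ∪ (l.take (k+1)).toFinset) ≠ 0 :=
        fun l hl k hk => ne_of_gt (reg_prefix_pos G a Ihat hgpos hIG hl hsub k hk)
      have hregGb : ∀ l ∈ I.toList.permutations.toFinset, ∀ k < l.length,
          aSum a (nbr Gb ((∅ : Finset V) ∪ (l.take (k+1)).toFinset))
            - aSum a ((∅ : Finset V) ∪ (l.take (k+1)).toFinset) ≠ 0 :=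
        fun l hl k hk => ne_of_gt (reg_prefix_pos Gb a Ihat hgposb hIb hl hsub k hk)
      refine ⟨TI G a I - TI Gb a I, EI G a I - EI Gb a I, fun _ =>
        ⟨(tendsto_TI_reg G a b hregG).sub (tendsto_TI_reg Gb a b hregGb), ?_, fun hIi => ?_,
         (tendsto_EI_reg G a b hregG).sub (tendsto_EI_reg Gb a b hregGb)⟩⟩
      · rw [sub_nonneg]
        refine Finset.sum_le_sum fun l hl => ?_
        refine Tlist_le G Gb a l ∅ ha fun k hk => ?_
        exact ⟨reg_prefix_pos G a Ihat hgpos hIG hl hsub k hk,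
          aSum_mono (fun i => (ha i).le) (nbr_subset_addEdge G istar jstar _)⟩
      · subst hIi
        rw [sub_pos]
        refine Finset.sum_lt_sum (fun l hl => Tlist_le G Gb a l ∅ ha fun k hk =>
          ⟨reg_prefix_pos G a Ihat hgpos hIG hl hsub k hk,
            aSum_mono (fun i => (ha i).le) (nbr_subset_addEdge G istar jstar _)⟩)
          ⟨({istar} : Finset V).toList, self_mem_perms _, ?_⟩
        rw [Finset.toList_singleton]
        simp only [Tlist]
        rw [mul_one, mul_one]
        have hins : insert istar (∅ : Finset V) = {istar} := rfl
        rw [hins]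
        have hg1 : 0 < aSum a (nbr G {istar}) - aSum a {istar} := by
          refine hgpos _ (singleton_mem_indepSets G istar) (fun h => ?_)
          exact hmem.1 (h ▸ Finset.mem_singleton_self istar)
        have hjn : jstar ∉ nbr G {istar} := by
          rw [mem_nbr]
          rintro ⟨x, hx, hadj⟩
          rw [Finset.mem_singleton] at hx
          exact hnadj (hx ▸ hadj)
        have hnbr2 : nbr Gb {istar} = insert jstar (nbr G {istar}) :=
          nbr_addEdge_singleton hne
        have hsum2 : aSum a (nbr Gb {istar}) = a jstar + aSum a (nbr G {istar}) := by
          rw [hnbr2, aSum, Finset.sum_insert hjn]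
          rfl
        apply div_lt_div_of_pos_left (ha istar) hg1
        rw [hsum2]
        linarith [ha jstar]
  have hkey2 : ∀ I : Finset V, ∃ u e : ℝ, (I ∈ indepSets G → I ∉ indepSets Gb →
      (Filter.Tendsto (fun δ : ℝ => TI G (fun i => a i + b i * δ) I) (𝓝[>] 0) (𝓝 u) ∧
       0 ≤ u ∧
       Filter.Tendsto (fun δ : ℝ => EI G (fun i => a i + b i * δ) I) (𝓝[>] 0) (𝓝 e))) := by
    intro I
    by_cases hI2 : I ∈ indepSets G ∧ I ∉ indepSets Gb
    swap
    · exact ⟨0, 0, fun h1 h2 => absurd ⟨h1, h2⟩ hI2⟩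
    obtain ⟨hIG, hInb⟩ := hI2
    have hst : istar ∈ I := by
      by_contra h
      exact hInb (mem_indepSets_addEdge hIG (fun hh => h hh.1))
    have hsub : ¬ Ihat ⊆ I := fun h => hmem.2.2 ⟨I, hIG, Or.inl hst, h⟩
    have hregG : ∀ l ∈ I.toList.permutations.toFinset, ∀ k < l.length,
        aSum a (nbr G ((∅ : Finset V) ∪ (l.take (k+1)).toFinset))
          - aSum a ((∅ : Finset V) ∪ (l.take (k+1)).toFinset) ≠ 0 :=
      fun l hl k hk => ne_of_gt (reg_prefix_pos G a Ihat hgpos hIG hl hsub k hk)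
    refine ⟨TI G a I, EI G a I, fun _ _ =>
      ⟨tendsto_TI_reg G a b hregG, ?_, tendsto_EI_reg G a b hregG⟩⟩
    exact Finset.sum_nonneg fun l hl =>
      (Tlist_pos G a l ∅ ha (reg_prefix_pos G a Ihat hgpos hIG hl hsub)).le
  choose u1 e1 h1 using hkey1
  choose u2 e2 h2 using hkey2
  refine ⟨(∑ I ∈ indepSets Gb, u1 I) + ∑ I ∈ indepSets G \ indepSets Gb, u2 I,
          (∑ I ∈ indepSets Gb, e1 I) + ∑ I ∈ indepSets G \ indepSets Gb, e2 I, ?_, ?_, ?_⟩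
  · have hfirst : 0 < ∑ I ∈ indepSets Gb, u1 I := by
      refine Finset.sum_pos' (fun I hI => (h1 I hI).2.1) ⟨{istar}, ?_, ?_⟩
      · exact singleton_mem_indepSets Gb istar
      · exact (h1 {istar} (singleton_mem_indepSets Gb istar)).2.2.1 rfl
    have hsecond : 0 ≤ ∑ I ∈ indepSets G \ indepSets Gb, u2 I := by
      refine Finset.sum_nonneg fun I hI => ?_
      rw [Finset.mem_sdiff] at hI
      exact (h2 I hI.1 hI.2).2.1
    linarith
  · have hsum : Filter.Tendsto (fun δ : ℝ =>
        (∑ I ∈ indepSets Gb, (TI G (fun i => a i + b i * δ) I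
          - TI Gb (fun i => a i + b i * δ) I))
        + ∑ I ∈ indepSets G \ indepSets Gb, TI G (fun i => a i + b i * δ) I) (𝓝[>] 0)
        (𝓝 ((∑ I ∈ indepSets Gb, u1 I) + ∑ I ∈ indepSets G \ indepSets Gb, u2 I)) := by
      refine Filter.Tendsto.add ?_ ?_
      · exact tendsto_finset_sum _ fun I hI => (h1 I hI).1
      · refine tendsto_finset_sum _ fun I hI => ?_
        rw [Finset.mem_sdiff] at hI
        exact (h2 I hI.1 hI.2).1
    refine hsum.congr fun δ => ?_
    rw [Finset.sum_sub_distrib,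
      ← Finset.sum_sdiff hsubsets (f := fun I => TI G (fun i => a i + b i * δ) I)]
    ring
  · have hsum : Filter.Tendsto (fun δ : ℝ =>
        (∑ I ∈ indepSets Gb, (EI G (fun i => a i + b i * δ) I
          - EI Gb (fun i => a i + b i * δ) I))
        + ∑ I ∈ indepSets G \ indepSets Gb, EI G (fun i => a i + b i * δ) I) (𝓝[>] 0)
        (𝓝 ((∑ I ∈ indepSets Gb, e1 I) + ∑ I ∈ indepSets G \ indepSets Gb, e2 I)) := by
      refine Filter.Tendsto.add ?_ ?_
      · exact tendsto_finset_sum _ fun I hI => (h1 I hI).2.2.2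
      · refine tendsto_finset_sum _ fun I hI => ?_
        rw [Finset.mem_sdiff] at hI
        exact (h2 I hI.1 hI.2).2.2
    refine hsum.congr fun δ => ?_
    rw [Finset.sum_sub_distrib,
      ← Finset.sum_sdiff hsubsets (f := fun I => EI G (fun i => a i + b i * δ) I)]
    ring
end BP
theorem stmt6
    {V : Type} [Fintype V] [DecidableEq V] (G : SimpleGraph V)
    (istar jstar : V) (hne : istar ≠ jstar) (hnadj : ¬ G.Adj istar jstar)
    (a b : V → ℝ) (δbar : ℝ) (hδbar : 0 < δbar)
    (ha : ∀ i, 0 < a i)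
    (hpos : ∀ δ : ℝ, 0 < δ → δ ≤ δbar → ∀ i, 0 < a i + b i * δ)
    (hdist : ∀ δ : ℝ, 0 < δ → δ ≤ δbar → ∑ i, (a i + b i * δ) = 1)
    (hN : ∀ δ : ℝ, 0 < δ → δ ≤ δbar → Ncond G fun i => a i + b i * δ)
    (Ihat : Finset V) (hIhat : Ihat ∈ indepSets G)
    (hsat : aSum a (nbr G Ihat) = aSum a Ihat)
    (huniq : ∀ J ∈ indepSets G, aSum a (nbr G J) = aSum a J → J = Ihat)
    (hmem : istar ∉ Ihat ∧ jstar ∉ Ihat ∧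
      ¬ ∃ J ∈ indepSets G, (istar ∈ J ∨ jstar ∈ J) ∧ Ihat ⊆ J) :
    ∃ δ0 : ℝ, 0 < δ0 ∧ δ0 ≤ δbar ∧ ∀ δ : ℝ, 0 < δ → δ < δ0 →
      meanQ G (fun i => a i + b i * δ) <
        meanQ (addEdge G istar jstar) (fun i => a i + b i * δ) := by
  have hIoo : Set.Ioo (0:ℝ) δbar ∈ 𝓝[>] (0:ℝ) :=
    Ioo_mem_nhdsGT_of_mem ⟨le_refl 0, hδbar⟩
  -- basic gap facts
  have hgpos : ∀ Q ∈ indepSets G, Q ≠ Ihat → 0 < aSum a (nbr G Q) - aSum a Q := by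
    intro Q hQ hQne
    have hlim : Filter.Tendsto (fun δ : ℝ => aSum (fun i => a i + b i * δ) (nbr G Q)
        - aSum (fun i => a i + b i * δ) Q) (𝓝[>] 0) (𝓝 (aSum a (nbr G Q) - aSum a Q)) :=
      ((tendsto_aSum a b _).sub (tendsto_aSum a b _)).mono_left
        (nhdsWithin_le_nhds : 𝓝[>] (0:ℝ) ≤ 𝓝 0)
    have hge : 0 ≤ aSum a (nbr G Q) - aSum a Q := by
      refine ge_of_tendsto hlim ?_
      filter_upwards [hIoo] with δ hδ
      exact (sub_pos.mpr (hN δ hδ.1 hδ.2.le Q hQ)).le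
    rcases eq_or_lt_of_le hge with heq | hlt
    · exact absurd (huniq Q hQ (sub_eq_zero.mp heq.symm)) hQne
    · exact hlt
  have hsat0 : aSum a (nbr G Ihat) - aSum a Ihat = 0 := sub_eq_zero_of_eq hsat
  have hd : 0 < aSum b (nbr G Ihat) - aSum b Ihat := by
    have h := hN δbar hδbar le_rfl Ihat hIhat
    rw [aSum_linear, aSum_linear] at h
    by_contra h'
    push_neg at h'
    nlinarith [hsat, hδbar]
  have hIhat_ne : Ihat.Nonempty := (Finset.mem_filter.mp hIhat).2.1
  have hSpos : 0 < aSum a (nbr G Ihat) := by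
    rw [hsat]
    exact aSum_pos ha hIhat_ne
  obtain ⟨B, hBpos, hBD, hBN⟩ := sum_limits G a b Ihat ha hgpos hsat0 hd hIhat
  obtain ⟨c, w, hcpos, hcT, hwE⟩ := diff_limits G istar jstar hne hnadj a b ha Ihat hgpos
    hIhat_ne hmem
  have hApos : 0 < aSum a (nbr G Ihat) / (aSum b (nbr G Ihat) - aSum b Ihat) * B :=
    mul_pos (div_pos hSpos hd) hBpos
  -- main limit
  have hmain : Filter.Tendsto (fun δ : ℝ => δ^2 *
      ((∑ I ∈ indepSets (addEdge G istar jstar),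
          EI (addEdge G istar jstar) (fun i => a i + b i * δ) I) *
        (1 + ∑ I ∈ indepSets G, TI G (fun i => a i + b i * δ) I) -
       (∑ I ∈ indepSets G, EI G (fun i => a i + b i * δ) I) *
        (1 + ∑ I ∈ indepSets (addEdge G istar jstar),
          TI (addEdge G istar jstar) (fun i => a i + b i * δ) I))) (𝓝[>] 0)
      (𝓝 (aSum a (nbr G Ihat) / (aSum b (nbr G Ihat) - aSum b Ihat) * B * c)) := by
    have t1 := ((tendsto_id_zero.mul hwE).neg.mul hBD).add (hBN.mul hcT)
    rw [show -(0 * w) * B + aSum a (nbr G Ihat) / (aSum b (nbr G Ihat) - aSum b Ihat) * B * c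
      = aSum a (nbr G Ihat) / (aSum b (nbr G Ihat) - aSum b Ihat) * B * c by ring] at t1
    refine t1.congr fun δ => ?_
    ring
  have hev : ∀ᶠ δ in 𝓝[>] (0:ℝ), 0 < δ^2 *
      ((∑ I ∈ indepSets (addEdge G istar jstar),
          EI (addEdge G istar jstar) (fun i => a i + b i * δ) I) *
        (1 + ∑ I ∈ indepSets G, TI G (fun i => a i + b i * δ) I) -
       (∑ I ∈ indepSets G, EI G (fun i => a i + b i * δ) I) *
        (1 + ∑ I ∈ indepSets (addEdge G istar jstar),
          TI (addEdge G istar jstar) (fun i => a i + b i * δ) I)) :=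
    hmain.eventually (eventually_gt_nhds (mul_pos hApos hcpos))
  have hboth := hev.and (Filter.eventually_of_mem hIoo (fun δ hδ => hδ))
  rw [Filter.eventually_iff] at hboth
  obtain ⟨u, hu, hsubIoo⟩ := mem_nhdsGT_iff_exists_Ioo_subset.mp hboth
  refine ⟨min u δbar, lt_min hu hδbar, min_le_right u δbar, fun δ hδpos hδlt => ?_⟩
  have hδu : δ ∈ Set.Ioo (0:ℝ) u := ⟨hδpos, lt_of_lt_of_le hδlt (min_le_left u δbar)⟩
  obtain ⟨hX2, hδIoo⟩ := hsubIoo hδu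
  have hδbar' : δ ≤ δbar := hδIoo.2.le
  -- positivity of denominators
  have hTpos : ∀ (G' : SimpleGraph V), (∀ Q ∈ indepSets G', 0 < aSum (fun i => a i + b i * δ)
        (nbr G' Q) - aSum (fun i => a i + b i * δ) Q) →
      ∀ I ∈ indepSets G', 0 ≤ TI G' (fun i => a i + b i * δ) I := by
    intro G' hg I hI
    refine Finset.sum_nonneg fun l hl => ?_
    refine (Tlist_pos G' _ l ∅ (hpos δ hδpos hδbar') fun k hk => ?_).le
    rw [Finset.empty_union]
    exact hg _ (prefix_mem_indep hI hl hk).1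
  have hDGpos : 0 < 1 + ∑ I ∈ indepSets G, TI G (fun i => a i + b i * δ) I := by
    have := Finset.sum_nonneg (hTpos G
      (fun Q hQ => sub_pos.mpr (hN δ hδpos hδbar' Q hQ)))
    linarith
  have hDHpos : 0 < 1 + ∑ I ∈ indepSets (addEdge G istar jstar),
      TI (addEdge G istar jstar) (fun i => a i + b i * δ) I := by
    have hg : ∀ Q ∈ indepSets (addEdge G istar jstar),
        0 < aSum (fun i => a i + b i * δ) (nbr (addEdge G istar jstar) Q)
          - aSum (fun i => a i + b i * δ) Q := by
      intro Q hQ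
      have h1 := sub_pos.mpr (hN δ hδpos hδbar' Q (indepSets_addEdge_subset G istar jstar hQ))
      have h2 : aSum (fun i => a i + b i * δ) (nbr G Q)
          ≤ aSum (fun i => a i + b i * δ) (nbr (addEdge G istar jstar) Q) :=
        aSum_mono (fun i => (hpos δ hδpos hδbar' i).le) (nbr_subset_addEdge G istar jstar Q)
      linarith
    have := Finset.sum_nonneg (hTpos (addEdge G istar jstar) hg)
    linarith
  have hX : 0 < (∑ I ∈ indepSets (addEdge G istar jstar),
          EI (addEdge G istar jstar) (fun i => a i + b i * δ) I) *
        (1 + ∑ I ∈ indepSets G, TI G (fun i => a i + b i * δ) I) -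
       (∑ I ∈ indepSets G, EI G (fun i => a i + b i * δ) I) *
        (1 + ∑ I ∈ indepSets (addEdge G istar jstar),
          TI (addEdge G istar jstar) (fun i => a i + b i * δ) I) := by
    have hδ2 : 0 < δ^2 := by positivity
    nlinarith [hX2, hδ2]
  rw [meanQ, meanQ, inv_mul_eq_div, inv_mul_eq_div, div_lt_div_iff₀ hDGpos hDHpos]
  linarith [hX]
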